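/- arXiv:2302.11736 — 2 statements merged into one kernel-verified Lean document; each statement's English description precedes it below -/
import Mathlib

section
/- Let d ≥ 3 and let m be an integer coprime to d with d/2 < m < d. Suppose G ⊆ S_d is a subgroup that contains a transposition, acts transitively on {1, ..., d}, and has a subgroup that acts trivially on {m+1, ..., d} and transitively on {1, ..., m}. Then G = S_d. -/
open Finset Equiv

private lemma aux_dvd_card {α : Type*} [Fintype α] [DecidableEq α] (k : ℕ)
    (cls : α → Finset α) (A : Finset α)
    (hmem : ∀ x, x ∈ cls x)
    (heq : ∀ a x, x ∈ cls a → cls x = cls a)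
    (hcard : ∀ x, (cls x).card = k)
    (hsub : ∀ a ∈ A, cls a ⊆ A) : k ∣ A.card := by
  classical
  have hA : A = (A.image cls).biUnion id := by
    ext x
    simp only [mem_biUnion, mem_image, id]
    constructor
    · intro hx; exact ⟨cls x, ⟨x, hx, rfl⟩, hmem x⟩
    · rintro ⟨c, ⟨a, ha, rfl⟩, hx⟩; exact hsub a ha hx
  have hdisj : ∀ c1 ∈ A.image cls, ∀ c2 ∈ A.image cls, c1 ≠ c2 → Disjoint c1 c2 := by
    rintro c1 hc1 c2 hc2 hne
    simp only [mem_image] at hc1 hc2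
    obtain ⟨a, -, rfl⟩ := hc1
    obtain ⟨b, -, rfl⟩ := hc2
    refine Finset.disjoint_left.2 fun w hwa hwb => hne ?_
    rw [← heq a w hwa, heq b w hwb]
  rw [hA, Finset.card_biUnion (t := id) (fun c1 hc1 c2 hc2 hne => hdisj c1 (Finset.mem_coe.1 hc1) c2 (Finset.mem_coe.1 hc2) hne)]
  have h2 : ∀ c ∈ A.image cls, (id c : Finset α).card = k := by
    rintro c hc; simp only [mem_image] at hc; obtain ⟨a, -, rfl⟩ := hc; exact hcard a
  rw [Finset.sum_congr rfl h2, Finset.sum_const, smul_eq_mul]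
  exact dvd_mul_left k _

/-- Lemma 2.4 of Benedetto–Juul: a transitive subgroup of `S_d` containing a transposition
and containing a subgroup acting trivially on `{m+1,...,d}` and transitively on `{1,...,m}`,
where `gcd(m,d) = 1` and `d/2 < m < d`, is all of `S_d`. -/
theorem stmt_3 (d m : ℕ) (hd : 3 ≤ d) (hcop : Nat.Coprime m d)
    (hm1 : d < 2 * m) (hm2 : m < d)
    (G : Subgroup (Equiv.Perm (Fin d)))
    (htrans : ∀ i j : Fin d, ∃ σ ∈ G, σ i = j)
    (hswap : ∃ σ ∈ G, σ.IsSwap)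
    (H : Subgroup (Equiv.Perm (Fin d)))
    (hHG : H ≤ G)
    (hfix : ∀ σ ∈ H, ∀ i : Fin d, m ≤ (i : ℕ) → σ i = i)
    (hHtrans : ∀ i j : Fin d, (i : ℕ) < m → (j : ℕ) < m → ∃ σ ∈ H, σ i = j) :
    G = ⊤ := by
  classical
  have hd0 : 0 < d := by omega
  set R : Fin d → Fin d → Prop := fun i j => Equiv.swap i j ∈ G with hR
  have hrefl : ∀ i, R i i := by
    intro i
    show Equiv.swap i i ∈ G
    rw [Equiv.swap_self]
    exact G.one_mem
  have hsymm : ∀ {i j}, R i j → R j i := by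
    intro i j h
    show Equiv.swap j i ∈ G
    rwa [Equiv.swap_comm]
  have hconj : ∀ σ ∈ G, ∀ i j, R i j → R (σ i) (σ j) := by
    intro σ hσ i j hij
    show Equiv.swap (σ i) (σ j) ∈ G
    rw [Equiv.swap_apply_apply]
    exact G.mul_mem (G.mul_mem hσ hij) (G.inv_mem hσ)
  have htr : ∀ {i j l}, R i j → R j l → R i l := by
    intro i j l hij hjl
    by_cases hij' : i = j
    · rwa [hij']
    by_cases hjl' : j = l
    · rwa [← hjl']
    by_cases hil : i = l
    · rw [hil]; exact hrefl l
    have h1 : R (Equiv.swap j l i) (Equiv.swap j l j) := hconj _ hjl i j hij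
    rwa [Equiv.swap_apply_of_ne_of_ne hij' hil, Equiv.swap_apply_left] at h1
  set cls : Fin d → Finset (Fin d) := fun i => univ.filter (fun x => R i x) with hcls
  have hmem : ∀ x, x ∈ cls x := fun x => by
    simp only [hcls, mem_filter, mem_univ, true_and]; exact hrefl x
  have hmem' : ∀ a x, x ∈ cls a ↔ R a x := fun a x => by
    simp only [hcls, mem_filter, mem_univ, true_and]
  have heq : ∀ a x, x ∈ cls a → cls x = cls a := by
    intro a x hx
    rw [hmem'] at hx
    ext y
    rw [hmem', hmem']
    exact ⟨fun h => htr hx h, fun h => htr (hsymm hx) h⟩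
  have hcardconst : ∀ i j, (cls i).card = (cls j).card := by
    intro i j
    obtain ⟨σ, hσ, hσij⟩ := htrans i j
    have himg : cls j = (cls i).image σ := by
      ext y
      simp only [mem_image, hmem']
      constructor
      · intro hRjy
        refine ⟨σ⁻¹ y, ?_, by simp⟩
        have := hconj σ⁻¹ (G.inv_mem hσ) j y hRjy
        rwa [← hσij, ← Equiv.Perm.mul_apply, inv_mul_cancel, Equiv.Perm.one_apply] at this
      · rintro ⟨x, hRix, rfl⟩
        have := hconj σ hσ i x hRix
        rwa [hσij] at this
    rw [himg, Finset.card_image_of_injective _ σ.injective]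
  set z0 : Fin d := ⟨0, hd0⟩ with hz0
  set k : ℕ := (cls z0).card with hk
  have hk2 : 2 ≤ k := by
    obtain ⟨τ, hτG, a, b, hab, hτ⟩ := hswap
    have hRab : R a b := by show Equiv.swap a b ∈ G; rwa [← hτ]
    have hsub : ({a, b} : Finset (Fin d)) ⊆ cls a := by
      intro w hw
      rcases Finset.mem_insert.1 hw with rfl | hw
      · exact hmem w
      · rw [Finset.mem_singleton] at hw; subst hw; rw [hmem']; exact hRab
    calc 2 = ({a, b} : Finset (Fin d)).card := (Finset.card_pair hab).symm
    _ ≤ (cls a).card := Finset.card_le_card hsub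
    _ = k := hcardconst a z0
  -- card of the "left" block
  set L : Finset (Fin d) := univ.filter (fun x : Fin d => (x : ℕ) < m) with hL
  have hLcard : L.card = m := by
    have himg : L.image Fin.val = Finset.range m := by
      ext n
      simp only [mem_image, hL, mem_filter, mem_univ, true_and, Finset.mem_range]
      constructor
      · rintro ⟨x, hx, rfl⟩; exact hx
      · intro hn; exact ⟨⟨n, lt_trans hn hm2⟩, hn, rfl⟩
    have := Finset.card_image_of_injective L (Fin.val_injective)
    rw [himg, Finset.card_range] at this
    omega
  -- there is a class crossing the boundary
  have hcross : ∃ x y : Fin d, (x : ℕ) < m ∧ m ≤ (y : ℕ) ∧ R x y := by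
    by_contra hc
    push_neg at hc
    have hksub : ∀ x, (cls x).card = k := fun x => hcardconst x z0
    have h1 : k ∣ L.card := by
      refine aux_dvd_card k cls L hmem heq hksub ?_
      intro a ha y hy
      rw [hL, mem_filter] at ha ⊢
      refine ⟨mem_univ y, ?_⟩
      by_contra hym
      exact hc a y ha.2 (by omega) ((hmem' a y).1 hy)
    have h2 : k ∣ Lᶜ.card := by
      refine aux_dvd_card k cls Lᶜ hmem heq hksub ?_
      intro a ha y hy
      rw [Finset.mem_compl, hL, mem_filter] at ha ⊢
      intro hyL
      refine ha ⟨mem_univ a, ?_⟩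
      by_contra ham
      exact hc y a hyL.2 (by omega) (hsymm ((hmem' a y).1 hy))
    rw [hLcard] at h1
    have hLc : Lᶜ.card = d - m := by
      rw [Finset.card_compl, hLcard]
      simp
    rw [hLc] at h2
    have hkd : k ∣ d := by
      have := Nat.dvd_add h1 h2
      rwa [Nat.add_sub_cancel' (le_of_lt hm2)] at this
    have : k ∣ 1 := hcop ▸ Nat.dvd_gcd h1 hkd
    have := Nat.le_of_dvd one_pos this
    omega
  obtain ⟨x, y, hx, hy, hxy⟩ := hcross
  -- all of {0,...,m-1} is in the class of x
  have hbig : ∀ x' : Fin d, (x' : ℕ) < m → R x x' := by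
    intro x' hx'
    obtain ⟨σ, hσH, hσx⟩ := hHtrans x x' hx hx'
    have h1 : R (σ x) (σ y) := hconj σ (hHG hσH) x y hxy
    rw [hσx, hfix σ hσH y hy] at h1
    exact htr hxy (hsymm h1)
  have hclsx : m + 1 ≤ (cls x).card := by
    have hsub : insert y L ⊆ cls x := by
      intro w hw
      rcases Finset.mem_insert.1 hw with rfl | hw
      · rw [hmem']; exact hxy
      · rw [hL, mem_filter] at hw
        rw [hmem']; exact hbig w hw.2
    have hyL : y ∉ L := by rw [hL, mem_filter]; omega
    calc m + 1 = (insert y L).card := by rw [Finset.card_insert_of_notMem hyL, hLcard]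
    _ ≤ (cls x).card := Finset.card_le_card hsub
  -- every point is related to x
  have hallx : ∀ i : Fin d, R x i := by
    intro i
    have hci : m + 1 ≤ (cls i).card := (hcardconst i x) ▸ hclsx
    have hinter : 0 < (cls x ∩ cls i).card := by
      have h1 := Finset.card_union_add_card_inter (cls x) (cls i)
      have h2 : (cls x ∪ cls i).card ≤ d := by
        have := Finset.card_le_card (Finset.subset_univ (cls x ∪ cls i))
        simpa using this
      omega
    obtain ⟨w, hw⟩ := Finset.card_pos.1 hinter
    rw [Finset.mem_inter, hmem', hmem'] at hw
    exact htr hw.1 (hsymm hw.2)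
  -- conclude
  rw [eq_top_iff, ← Equiv.Perm.closure_isSwap, Subgroup.closure_le]
  rintro τ ⟨a, b, hab, rfl⟩
  exact htr (hsymm (hallx a)) (hallx b)
end

section
/- Let K be a number field with ring of integers O_K, let π ∈ O_K be a prime element dividing d, let β be transcendental over K, and let f̄(x) = x^d - (d/(d-1))·β·x^{d-1} + π ∈ K[β][x]. Then for every n ≥ 1, the polynomial f̄^n(β) ∈ K[β] in the variable β is Eisenstein at π: its leading coefficient has π-valuation 0, its constant coefficient has π-valuation exactly 1, and all other coefficients have π-valuation at least 1. -/
open Polynomial NumberField IsDedekindDomain Multiplicative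

namespace Stmt5Aux

noncomputable def om : WithZero (Multiplicative ℤ) := ((ofAdd (-1 : ℤ) : Multiplicative ℤ) : WithZero (Multiplicative ℤ))

lemma om_le_one : om ≤ (1 : WithZero (Multiplicative ℤ)) := by
  rw [om, ← WithZero.coe_one, WithZero.coe_le_coe, ← ofAdd_zero, ofAdd_le]
  norm_num

lemma om_lt_one : om < (1 : WithZero (Multiplicative ℤ)) := by
  rw [om, ← WithZero.coe_one, WithZero.coe_lt_coe, ← ofAdd_zero, ofAdd_lt]
  norm_num

lemma om_pow_lt {d : ℕ} (hd : 2 ≤ d) : om ^ d < om := by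
  rw [om, ← WithZero.coe_pow, WithZero.coe_lt_coe, ← ofAdd_nsmul, ofAdd_lt]
  simp only [nsmul_eq_mul, mul_neg, mul_one]
  omega

variable {K : Type*} [Field K] (v : Valuation K (WithZero (Multiplicative ℤ)))

lemma mul_coeffs_le_one {p q : K[X]} (hp : ∀ j, v (p.coeff j) ≤ 1)
    (hq : ∀ j, v (q.coeff j) ≤ 1) : ∀ j, v ((p * q).coeff j) ≤ 1 := by
  intro j
  rw [coeff_mul]
  exact v.map_sum_le fun i _ => by
    rw [v.map_mul]; exact mul_le_one' (hp _) (hq _)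

lemma pow_coeffs_le_one {p : K[X]} (hp : ∀ j, v (p.coeff j) ≤ 1) (m : ℕ) :
    ∀ j, v ((p ^ m).coeff j) ≤ 1 := by
  induction m with
  | zero =>
    intro j
    rcases Nat.eq_zero_or_pos j with rfl | hj
    · simp
    · simp [coeff_one, Nat.pos_iff_ne_zero.mp hj]
  | succ m ih =>
    rw [pow_succ]
    exact mul_coeffs_le_one v ih hp

lemma mul_coeffs_low {p q : K[X]} {D E : ℕ}
    (hp1 : ∀ j, v (p.coeff j) ≤ 1) (hq1 : ∀ j, v (q.coeff j) ≤ 1)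
    (hpD : ∀ j < D, v (p.coeff j) ≤ om) (hqE : ∀ j < E, v (q.coeff j) ≤ om) :
    ∀ j < D + E, v ((p * q).coeff j) ≤ om := by
  intro j hj
  rw [coeff_mul]
  apply v.map_sum_le
  intro i hi
  rw [Finset.HasAntidiagonal.mem_antidiagonal] at hi
  rw [v.map_mul]
  rcases lt_or_ge i.1 D with h | h
  · calc v (p.coeff i.1) * v (q.coeff i.2) ≤ om * 1 := mul_le_mul' (hpD _ h) (hq1 _)
      _ = om := mul_one _
  · have h2 : i.2 < E := by omega
    calc v (p.coeff i.1) * v (q.coeff i.2) ≤ 1 * om := mul_le_mul' (hp1 _) (hqE _ h2)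
      _ = om := one_mul _

lemma pow_coeffs_low {p : K[X]} {D : ℕ}
    (hp1 : ∀ j, v (p.coeff j) ≤ 1) (hpD : ∀ j < D, v (p.coeff j) ≤ om) :
    ∀ m : ℕ, 1 ≤ m → ∀ j < m * D, v ((p ^ m).coeff j) ≤ om := by
  intro m
  induction m with
  | zero => omega
  | succ m ih =>
    intro _ j hj
    rcases Nat.eq_zero_or_pos m with rfl | hm
    · rw [pow_one]
      exact hpD j (by omega)
    · rw [pow_succ]
      exact mul_coeffs_low v (pow_coeffs_le_one v hp1 m) hp1 (ih hm) hpD j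
        (by have : (m + 1) * D = m * D + D := by ring
            omega)


lemma base {d : ℕ} (hd : 2 ≤ d) {c e : K} (hc : v c ≤ om) (he : v e = om) :
    ((X : K[X]) ^ d - C c * X * X ^ (d - 1) + C e).natDegree = d ∧
    v (((X : K[X]) ^ d - C c * X * X ^ (d - 1) + C e).leadingCoeff) = 1 ∧
    v (((X : K[X]) ^ d - C c * X * X ^ (d - 1) + C e).coeff 0) = om ∧
    ∀ k, 0 < k → k < d → v (((X : K[X]) ^ d - C c * X * X ^ (d - 1) + C e).coeff k) ≤ om := by
  have hXX : (X : K[X]) * X ^ (d - 1) = X ^ d := by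
    rw [← pow_succ']
    congr 1
    omega
  have hq' : (X : K[X]) ^ d - C c * X * X ^ (d - 1) + C e = C (1 - c) * X ^ d + C e := by
    rw [mul_assoc, hXX, map_sub, map_one]
    ring
  have hv1c : v (1 - c) = 1 := by
    have h1 : v (1 : K) ≠ v (-c) := by
      rw [v.map_one, v.map_neg]
      exact (lt_of_le_of_lt hc om_lt_one).ne'
    have h2 := v.map_add_of_distinct_val h1
    rw [v.map_one, v.map_neg] at h2
    rw [sub_eq_add_neg, h2]
    exact max_eq_left (hc.trans om_lt_one.le)
  have hcoeff : ∀ k, ((X : K[X]) ^ d - C c * X * X ^ (d - 1) + C e).coeff k =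
      (if k = d then 1 - c else 0) + (if k = 0 then e else 0) := by
    intro k
    rw [hq', coeff_add, coeff_C_mul_X_pow, coeff_C]
  have h1cne : (1 : K) - c ≠ 0 := by
    intro h
    rw [h, map_zero] at hv1c
    exact zero_ne_one hv1c
  have hdeg : ((X : K[X]) ^ d - C c * X * X ^ (d - 1) + C e).natDegree = d := by
    apply le_antisymm
    · rw [hq']
      apply (natDegree_add_le _ _).trans
      simp only [natDegree_C, max_le_iff]
      exact ⟨natDegree_C_mul_X_pow_le _ _, by omega⟩
    · apply le_natDegree_of_ne_zero
      rw [hcoeff, if_pos rfl, if_neg (by omega), add_zero]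
      exact h1cne
  refine ⟨hdeg, ?_, ?_, ?_⟩
  · rw [leadingCoeff, hdeg, hcoeff, if_pos rfl, if_neg (by omega), add_zero, hv1c]
  · rw [hcoeff, if_neg (by omega), if_pos rfl, zero_add, he]
  · intro k hk0 hkd
    rw [hcoeff, if_neg (by omega), if_neg (by omega), add_zero, map_zero]
    exact zero_le'


lemma step {d D : ℕ} (hd : 2 ≤ d) (hD : 2 ≤ D)
    {c e : K} (hc : v c ≤ om) (he : v e = om)
    {p : K[X]} (hdeg : p.natDegree = D) (hlc : v p.leadingCoeff = 1)
    (hp0 : v (p.coeff 0) = om) (hmid : ∀ k, 0 < k → k < D → v (p.coeff k) ≤ om) :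
    (p ^ d - C c * X * p ^ (d - 1) + C e).natDegree = d * D ∧
    v ((p ^ d - C c * X * p ^ (d - 1) + C e).leadingCoeff) = 1 ∧
    v ((p ^ d - C c * X * p ^ (d - 1) + C e).coeff 0) = om ∧
    ∀ k, 0 < k → k < d * D → v ((p ^ d - C c * X * p ^ (d - 1) + C e).coeff k) ≤ om := by
  set q := p ^ d - C c * X * p ^ (d - 1) + C e with hq
  have hp1 : ∀ j, v (p.coeff j) ≤ 1 := by
    intro j
    rcases lt_trichotomy j D with hj | rfl | hj
    · rcases Nat.eq_zero_or_pos j with rfl | hj0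
      · exact hp0.le.trans om_le_one
      · exact (hmid j hj0 hj).trans om_le_one
    · rw [← hdeg, ← leadingCoeff, hlc]
    · rw [coeff_eq_zero_of_natDegree_lt (by omega : p.natDegree < j), map_zero]
      exact zero_le'
  have hlow : ∀ j < D, v (p.coeff j) ≤ om := by
    intro j hj
    rcases Nat.eq_zero_or_pos j with rfl | hj0
    · exact hp0.le
    · exact hmid j hj0 hj
  have hlcne : p.leadingCoeff ≠ 0 := by
    intro hl
    rw [hl, map_zero] at hlc
    exact zero_ne_one hlc
  have hmulDd : d * D = (d - 1) * D + D := by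
    have h1 : d - 1 + 1 = d := by omega
    calc d * D = (d - 1 + 1) * D := by rw [h1]
      _ = (d - 1) * D + D := by ring
  have hpd_deg : (p ^ d).natDegree = d * D := by rw [natDegree_pow, hdeg]
  have hcross_deg : (C c * X * p ^ (d - 1)).natDegree ≤ 1 + (d - 1) * D := by
    calc (C c * X * p ^ (d - 1)).natDegree
        ≤ (C c * X).natDegree + (p ^ (d - 1)).natDegree := natDegree_mul_le
      _ ≤ 1 + (d - 1) * D := by
          apply add_le_add
          · exact (natDegree_C_mul_le c X).trans (by simp)
          · exact natDegree_pow_le.trans (by rw [hdeg])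
  -- coeff of q at d * D
  have hcoefftop : q.coeff (d * D) = p.leadingCoeff ^ d := by
    have h1 : (p ^ d).coeff (d * D) = p.leadingCoeff ^ d := by
      rw [← hpd_deg, ← leadingCoeff, leadingCoeff_pow]
    have h2 : (C c * X * p ^ (d - 1)).coeff (d * D) = 0 := by
      apply coeff_eq_zero_of_natDegree_lt
      apply lt_of_le_of_lt hcross_deg
      omega
    have h3 : (C e).coeff (d * D) = 0 := by
      rw [coeff_C, if_neg]
      have := Nat.mul_pos (by omega : 0 < d) (by omega : 0 < D)
      omega
    rw [hq, coeff_add, coeff_sub, h1, h2, h3, sub_zero, add_zero]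
  have hne : q.coeff (d * D) ≠ 0 := by
    rw [hcoefftop]
    exact pow_ne_zero _ hlcne
  have hqdeg : q.natDegree = d * D := by
    apply le_antisymm
    · apply (natDegree_add_le _ _).trans
      simp only [natDegree_C, max_le_iff]
      constructor
      · apply (natDegree_sub_le _ _).trans
        simp only [max_le_iff]
        exact ⟨hpd_deg.le, hcross_deg.trans (by omega)⟩
      · omega
    · exact le_natDegree_of_ne_zero hne
  refine ⟨hqdeg, ?_, ?_, ?_⟩
  · rw [leadingCoeff, hqdeg, hcoefftop, map_pow, hlc, one_pow]
  · have h1 : (p ^ d).coeff 0 = p.coeff 0 ^ d := by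
      simpa [constantCoeff_apply] using map_pow (constantCoeff (R := K)) p d
    have h2 : (C c * X * p ^ (d - 1)).coeff 0 = 0 := by
      rw [mul_assoc, mul_coeff_zero, mul_coeff_zero, coeff_X_zero]
      ring
    have hq0 : q.coeff 0 = p.coeff 0 ^ d + e := by
      rw [hq, coeff_add, coeff_sub, h1, h2, sub_zero, coeff_C, if_pos rfl]
    have hval : v (p.coeff 0 ^ d) = om ^ d := by rw [map_pow, hp0]
    have hne' : v (p.coeff 0 ^ d) ≠ v e := by
      rw [hval, he]
      exact ne_of_lt (om_pow_lt hd)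
    rw [hq0, v.map_add_of_distinct_val hne', hval, he]
    exact max_eq_right (om_pow_lt hd).le
  · intro k hk0 hk
    obtain ⟨m, rfl⟩ : ∃ m, k = m + 1 := ⟨k - 1, by omega⟩
    have h2 : (C c * X * p ^ (d - 1)).coeff (m + 1) = c * (p ^ (d - 1)).coeff m := by
      rw [mul_assoc, coeff_C_mul, coeff_X_mul]
    have hqk : q.coeff (m + 1) =
        (p ^ d).coeff (m + 1) - c * (p ^ (d - 1)).coeff m := by
      rw [hq, coeff_add, coeff_sub, h2, coeff_C, if_neg (by omega), add_zero]
    rw [hqk]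
    apply le_trans (v.map_sub _ _)
    apply max_le
    · exact pow_coeffs_low v hp1 hlow d (by omega) (m + 1) hk
    · rw [v.map_mul]
      calc v c * v ((p ^ (d - 1)).coeff m) ≤ om * 1 :=
            mul_le_mul' hc (pow_coeffs_le_one v hp1 (d - 1) m)
        _ = om := mul_one _


end Stmt5Aux

open Stmt5Aux

/-- Let `K` be a number field, `π ∈ O_K` a prime element dividing `d` (`d ≥ 2`), and
`f̄(x) = x^d - (d/(d-1))·β·x^{d-1} + π` over `K[β]`.  Then for every `n ≥ 1` the iterate
`f̄^n(β)`, as a polynomial `h n` in the variable `β` over `K`, is Eisenstein at `π`: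
it has degree `d^n`, its leading coefficient has `π`-adic valuation `0`, its constant
coefficient has `π`-adic valuation exactly `1`, and all other coefficients have
`π`-adic valuation at least `1`. -/

theorem stmt_5 (K : Type*) [Field K] [NumberField K]
    (d : ℕ) (hd : 2 ≤ d)
    (π : 𝓞 K) (hπ : Prime π) (hπd : π ∣ (d : 𝓞 K))
    (h : ℕ → Polynomial K)
    (h0 : h 0 = X)
    (hrec : ∀ k : ℕ, h (k + 1) =
      (h k) ^ d - C ((d : K) / ((d : K) - 1)) * X * (h k) ^ (d - 1) +
        C (algebraMap (𝓞 K) K π))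
    (v : HeightOneSpectrum (𝓞 K)) (hv : v.asIdeal = Ideal.span {π}) :
    ∀ n : ℕ, 1 ≤ n →
      (h n).natDegree = d ^ n ∧
      v.valuation K ((h n).leadingCoeff) = 1 ∧
      v.valuation K ((h n).coeff 0) = ((ofAdd (-1 : ℤ) : Multiplicative ℤ) : WithZero (Multiplicative ℤ)) ∧
      (∀ k : ℕ, 0 < k → k < d ^ n →
        v.valuation K ((h n).coeff k) ≤ ((ofAdd (-1 : ℤ) : Multiplicative ℤ) : WithZero (Multiplicative ℤ))) := by
  have hspan : ∀ r : 𝓞 K, v.asIdeal ∣ Ideal.span {r} ↔ π ∣ r := by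
    intro r
    rw [hv, Ideal.dvd_iff_le, Ideal.span_singleton_le_span_singleton]
  -- the valuation of π
  have he : v.valuation K (algebraMap (𝓞 K) K π) = om := by
    rw [IsDedekindDomain.HeightOneSpectrum.valuation_of_algebraMap]
    have hle : v.intValuation π ≤ om := by
      rw [om]
      have := (v.intValuation_le_pow_iff_dvd π 1).mpr (by rw [pow_one, hv])
      exact this
    have hnle : ¬ v.intValuation π ≤ ((ofAdd (-2 : ℤ) : Multiplicative ℤ) : WithZero (Multiplicative ℤ)) := by
      intro hcon
      have h2 : v.asIdeal ^ 2 ∣ Ideal.span {π} := by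
        rw [← v.intValuation_le_pow_iff_dvd π 2]
        exact hcon
      rw [hv, Ideal.span_singleton_pow, Ideal.dvd_iff_le,
        Ideal.span_singleton_le_span_singleton] at h2
      have hππ : π * π ∣ π * 1 := by rw [mul_one, ← pow_two]; exact h2
      have h1 : π ∣ 1 := (mul_dvd_mul_iff_left hπ.ne_zero).mp hππ
      exact hπ.not_unit (isUnit_of_dvd_one h1)
    have hne0 : v.intValuation π ≠ 0 := by
      intro hz
      exact hnle (hz ▸ zero_le')
    obtain ⟨b, hb⟩ : ∃ b : Multiplicative ℤ, (b : WithZero (Multiplicative ℤ)) = v.intValuation π :=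
      ⟨WithZero.unzero hne0, WithZero.coe_unzero hne0⟩
    rw [om] at hle
    rw [← hb, WithZero.coe_le_coe] at hle hnle
    rw [← hb, om, WithZero.coe_inj]
    have h1 : Multiplicative.toAdd b ≤ -1 := hle
    have h2 : ¬ Multiplicative.toAdd b ≤ -2 := hnle
    have h3 : Multiplicative.toAdd b = -1 := by omega
    rw [← ofAdd_toAdd b, h3]
  -- the valuation of d/(d-1)
  have hc : v.valuation K ((d : K) / ((d : K) - 1)) ≤ om := by
    have hcast : ((d : K)) = algebraMap (𝓞 K) K ((d : 𝓞 K)) := by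
      rw [map_natCast]
    have hcast1 : ((d : K) - 1) = algebraMap (𝓞 K) K ((d : 𝓞 K) - 1) := by
      rw [map_sub, map_one, map_natCast]
    have hd1 : v.valuation K ((d : K) - 1) = 1 := by
      rw [hcast1, IsDedekindDomain.HeightOneSpectrum.valuation_of_algebraMap]
      rcases lt_or_eq_of_le (v.intValuation_le_one ((d : 𝓞 K) - 1)) with hlt | heq
      · exfalso
        rw [HeightOneSpectrum.intValuation_lt_one_iff_dvd, hspan] at hlt
        have h1 : π ∣ 1 := by
          have := dvd_sub hπd hlt
          simpa using this
        exact hπ.not_unit (isUnit_of_dvd_one h1)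
      · exact heq
    have hdv : v.valuation K ((d : K)) ≤ om := by
      rw [hcast, IsDedekindDomain.HeightOneSpectrum.valuation_of_algebraMap, om]
      have := (v.intValuation_le_pow_iff_dvd (d : 𝓞 K) 1).mpr
        (by rw [pow_one]; exact (hspan _).mpr hπd)
      exact this
    rw [map_div₀, hd1, div_one]
    exact hdv
  intro n hn
  induction n, hn using Nat.le_induction with
  | base =>
    rw [hrec 0, h0, pow_one]
    exact Stmt5Aux.base (v.valuation K) hd hc he
  | succ n hn ih =>
    rw [hrec n, pow_succ']
    have hD : 2 ≤ d ^ n := by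
      have h1 : d ^ 1 ≤ d ^ n := Nat.pow_le_pow_right (by omega) hn
      rw [pow_one] at h1
      omega
    obtain ⟨h1, h2, h3, h4⟩ := ih
    exact Stmt5Aux.step (v.valuation K) hd hD hc he h1 h2 h3 h4
end
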